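/- Let ℓ be a prime not dividing N and let d be a positive divisor of N with gcd(d, N/d) = 1. Let s = [[1,0,0],[a,ℓ,0],[b,c,ℓ₃]] be a lower-triangular integer matrix with ℓ₃ ∈ {1, ℓ}, and suppose ℓ does not divide ad + 1. Then there exists γ ∈ Γ₀(3,N) of the form [[A,B,0],[C,D,0],[0,0,1]] such that sγ ∈ P_d, and the matrix x = g_d s γ g_d⁻¹ ∈ P₀ satisfies x₁₁ = 1 and ψ₀²(x) = [[ℓ, 0],[−bℓd + c(ad+1), ℓ₃]]. -/

import Mathlib

open Matrix

/-- `Γ₀(3,N)`: 3×3 integer matrices of determinant `1` whose first row is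
`≡ (∗,0,0) (mod N)`. -/
def Gamma03 (N : ℕ) : Set (Matrix (Fin 3) (Fin 3) ℤ) :=
  {g | g.det = 1 ∧ (N : ℤ) ∣ g 0 1 ∧ (N : ℤ) ∣ g 0 2}

/-- `g_x`: the 3×3 identity matrix with its `(1,2)` entry replaced by `x`. -/
def g3 (x : ℤ) : Matrix (Fin 3) (Fin 3) ℤ := !![1, x, 0; 0, 1, 0; 0, 0, 1]

/-- Conjugation `g_d m g_d⁻¹` (note `g_d⁻¹ = g_{-d}`). -/
def conj3 (d : ℤ) (m : Matrix (Fin 3) (Fin 3) ℤ) : Matrix (Fin 3) (Fin 3) ℤ :=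
  g3 d * m * g3 (-d)

/-- `ψ₀²`: the lower-right 2×2 block. -/
def psi02 (m : Matrix (Fin 3) (Fin 3) ℤ) : Matrix (Fin 2) (Fin 2) ℤ :=
  !![m 1 1, m 1 2; m 2 1, m 2 2]

/-- case 3 of Theorem calcx: `ℓ₁ = 1`, `ℓ₂ = ℓ`, `ℓ ∤ ad + 1`. -/
theorem stmt10 (N : ℕ) (hN : 0 < N) (ℓ : ℕ) (hℓ : ℓ.Prime) (hℓN : ¬ ℓ ∣ N)
    (d : ℕ) (hd : 0 < d) (hdvd : d ∣ N) (hgcd : Nat.gcd d (N / d) = 1)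
    (ℓ₃ a b c : ℤ) (h3 : ℓ₃ = 1 ∨ ℓ₃ = (ℓ : ℤ)) (hnd : ¬ (ℓ : ℤ) ∣ (a * (d : ℤ) + 1)) :
    ∃ A B C D : ℤ, ∃ x : Matrix (Fin 3) (Fin 3) ℤ,
      (!![A, B, 0; C, D, 0; 0, 0, 1] : Matrix (Fin 3) (Fin 3) ℤ) ∈ Gamma03 N ∧
      x = conj3 (d : ℤ)
        (!![1, 0, 0; a, (ℓ : ℤ), 0; b, c, ℓ₃] * !![A, B, 0; C, D, 0; 0, 0, 1]) ∧
      x.det ≠ 0 ∧ (∀ j : Fin 3, j ≠ 0 → x 0 j = 0) ∧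
      x 0 0 = 1 ∧
      psi02 x = !![(ℓ : ℤ), 0;
        -b * (ℓ : ℤ) * (d : ℤ) + c * (a * (d : ℤ) + 1), ℓ₃] := by
  have hpl : Prime (ℓ : ℤ) := Nat.prime_iff_prime_int.mp hℓ
  have hud : IsCoprime (a * (d:ℤ) + 1) (d:ℤ) := ⟨1, -a, by ring⟩
  have hul : IsCoprime (a * (d:ℤ) + 1) (ℓ:ℤ) := (hpl.coprime_iff_not_dvd.mpr hnd).symm
  obtain ⟨A₀, C₀, h1⟩ : IsCoprime (a * (d:ℤ) + 1) ((ℓ:ℤ) * d) := hul.mul_right hud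
  have hdM : (d:ℤ) * (N / d : ℕ) = (N:ℤ) := by
    exact_mod_cast congrArg (Nat.cast : ℕ → ℤ) (Nat.mul_div_cancel' hdvd)
  have hlM : IsCoprime (ℓ:ℤ) ((N / d : ℕ):ℤ) := by
    refine hpl.coprime_iff_not_dvd.mpr ?_
    rw [Int.natCast_dvd_natCast]
    exact fun h => hℓN (h.trans (Nat.div_dvd_of_dvd hdvd))
  have hdMc : IsCoprime ((d:ℕ):ℤ) ((N / d : ℕ):ℤ) := Nat.isCoprime_iff_coprime.mpr hgcd
  obtain ⟨p, q, h2⟩ : IsCoprime ((ℓ:ℤ) * d) ((N / d : ℕ):ℤ) := hlM.mul_left hdMc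
  obtain ⟨A, hA⟩ : ∃ A : ℤ, A = A₀ - (ℓ:ℤ) * d * (p * (A₀ - ℓ)) := ⟨_, rfl⟩
  obtain ⟨C, hC⟩ : ∃ C : ℤ, C = C₀ + (a * d + 1) * (p * (A₀ - ℓ)) := ⟨_, rfl⟩
  obtain ⟨B, hB⟩ : ∃ B : ℤ, B = (d:ℤ) * (A - ℓ) := ⟨_, rfl⟩
  obtain ⟨D, hD⟩ : ∃ D : ℤ, D = (a * (d:ℤ) + 1) + d * C := ⟨_, rfl⟩
  have hAC : (a * (d:ℤ) + 1) * A + (ℓ:ℤ) * d * C = 1 := by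
    rw [hA, hC]; linear_combination h1
  have hNB : (N:ℤ) ∣ B := by
    refine ⟨q * (A₀ - ℓ), ?_⟩
    rw [hB, hA]
    linear_combination (-(d:ℤ) * (A₀ - ℓ)) * h2 + (q * (A₀ - ℓ)) * hdM
  have hxE : conj3 (d : ℤ)
      (!![1, 0, 0; a, (ℓ : ℤ), 0; b, c, ℓ₃] * !![A, B, 0; C, D, 0; 0, 0, 1]) =
      !![1, 0, 0; a*A + ℓ*C, (ℓ:ℤ), 0;
         b*A + c*C, -b * (ℓ : ℤ) * (d : ℤ) + c * (a * (d : ℤ) + 1), ℓ₃] := by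
    simp only [conj3, g3, Matrix.mul_fin_three]
    ext i j
    fin_cases i <;> fin_cases j <;>
      simp [hB, hD] <;>
      first | ring1 | linear_combination hAC | linear_combination -hAC
  have hl0 : (ℓ:ℤ) * ℓ₃ ≠ 0 := by
    have : (ℓ:ℤ) ≠ 0 := by exact_mod_cast hℓ.ne_zero
    rcases h3 with h | h <;> rw [h] <;> simp [this, hℓ.ne_zero]
  refine ⟨A, B, C, D, _, ⟨?_, ?_, ?_⟩, rfl, ?_, ?_, ?_, ?_⟩
  · simp [Matrix.det_fin_three]
    rw [hB, hD, hA, hC]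
    linear_combination h1
  · simpa using hNB
  · simp
  · rw [hxE]
    have : (!![1, 0, 0; a*A + ℓ*C, (ℓ:ℤ), 0;
         b*A + c*C, -b * (ℓ : ℤ) * (d : ℤ) + c * (a * (d : ℤ) + 1), ℓ₃]).det = (ℓ:ℤ) * ℓ₃ := by
      simp [Matrix.det_fin_three]
    rw [this]
    exact hl0
  · intro j hj
    rw [hxE]
    fin_cases j
    · exact absurd rfl hj
    · simp
    · simp
  · rw [hxE]; simp
  · rw [hxE]
    ext i j
    fin_cases i <;> fin_cases j <;> simp [psi02]
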